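/- Let X be a random vector in ℝ^d and μ ∈ ℝ^d. The following are equivalent: (i) X satisfies Marden's model with location μ, i.e., there exist an orthogonal matrix Ω ∈ ℝ^{d×d} and a sign-flip invariant random vector Z in ℝ^d such that X has the same distribution as μ + Ω Z; (ii) for every 1 ≤ p ≤ d and every matrix A ∈ ℝ^{p×d} with orthonormal rows (A Aᵀ = I_p), there exist a matrix M ∈ ℝ^{p×d} with M Mᵀ = I_p and a sign-flip invariant random vector Z' in ℝ^d such that A(X − μ) has the same distribution as M Z'. (Proposition 1: the functional coordinate symmetric class reduces to Marden's model in ℝ^d.) -/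

import Mathlib

open MeasureTheory ProbabilityTheory Matrix

lemma measurable_mulVec' {p d : ℕ} (A : Matrix (Fin p) (Fin d) ℝ) :
    Measurable fun v : Fin d → ℝ => A.mulVec v := by
  have : Continuous (A.mulVecLin : (Fin d → ℝ) →ₗ[ℝ] (Fin p → ℝ)) :=
    LinearMap.continuous_of_finiteDimensional _
  exact this.measurable

/-- A random vector `Z` in `ℝ^n` is sign-flip invariant (coordinatewise symmetric) if for
every vector of signs `ε ∈ {−1, 1}^n`, `(ε 1 Z 1, …, ε n Z n)` has the same distribution
as `Z`. -/
def SignFlipInvariant {Ω : Type*} [MeasurableSpace Ω] (P : Measure Ω) {n : ℕ}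
    (Z : Ω → Fin n → ℝ) : Prop :=
  ∀ ε : Fin n → ℝ, (∀ i, ε i = 1 ∨ ε i = -1) →
    IdentDistrib (fun ω i => ε i * Z ω i) Z P P

/-- A random vector `X` in `ℝ^d` satisfies Marden's model with location `μ` if there exist
an orthogonal matrix `O` and a sign-flip invariant random vector `Z` (on some probability
space) such that `X` has the same distribution as `μ + O Z`. -/
def MardenModel {Ω : Type*} [MeasurableSpace Ω] (P : Measure Ω) {d : ℕ}
    (X : Ω → Fin d → ℝ) (μ : Fin d → ℝ) : Prop :=
  ∃ (O : Matrix (Fin d) (Fin d) ℝ), Oᵀ * O = 1 ∧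
    ∃ (Ω' : Type) (_ : MeasurableSpace Ω') (P' : Measure Ω') (_ : IsProbabilityMeasure P')
      (Z : Ω' → Fin d → ℝ), SignFlipInvariant P' Z ∧
        IdentDistrib X (fun ω' => μ + O.mulVec (Z ω')) P P'

/-- Proposition 1: the functional coordinate symmetric class reduces to
Marden's model in `ℝ^d`. `X` satisfies Marden's model with location `μ` if and only if
for every `1 ≤ p ≤ d` and every `A ∈ ℝ^{p×d}` with orthonormal rows (`A Aᵀ = I`), there
are `M ∈ ℝ^{p×d}` with `M Mᵀ = I` and a sign-flip invariant random vector `Z'` in `ℝ^d`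
such that `A (X − μ)` has the same distribution as `M Z'`. -/
theorem marden_iff_coordinate_symmetric
    {Ω : Type*} [MeasurableSpace Ω] (P : Measure Ω) [IsProbabilityMeasure P]
    (d : ℕ) (X : Ω → Fin d → ℝ) (μ : Fin d → ℝ) :
    MardenModel P X μ ↔
      ∀ (p : ℕ), 1 ≤ p → p ≤ d → ∀ A : Matrix (Fin p) (Fin d) ℝ, A * Aᵀ = 1 →
        ∃ M : Matrix (Fin p) (Fin d) ℝ, M * Mᵀ = 1 ∧
          ∃ (Ω' : Type) (_ : MeasurableSpace Ω') (P' : Measure Ω')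
            (_ : IsProbabilityMeasure P') (Z' : Ω' → Fin d → ℝ),
              SignFlipInvariant P' Z' ∧
                IdentDistrib (fun ω => A.mulVec (X ω - μ))
                  (fun ω' => M.mulVec (Z' ω')) P P' := by
  constructor
  · rintro ⟨O, hO, Ω', mΩ', P', hP', Z, hZ, hXZ⟩ p hp hpd A hA
    refine ⟨A * O, ?_, Ω', mΩ', P', hP', Z, hZ, ?_⟩
    · have hOO : O * Oᵀ = 1 := mul_eq_one_comm.mp hO
      rw [Matrix.transpose_mul, Matrix.mul_assoc, ← Matrix.mul_assoc O, hOO,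
        Matrix.one_mul, hA]
    · have hmeas : Measurable fun v : Fin d → ℝ => A.mulVec (v - μ) :=
        (measurable_mulVec' A).comp (measurable_id.sub measurable_const)
      have h2 := hXZ.comp hmeas
      convert h2 using 1
      all_goals (funext ω'; simp [add_sub_cancel_left, Matrix.mulVec_mulVec])
  · intro h
    rcases Nat.eq_zero_or_pos d with hd | hd
    · subst hd
      refine ⟨1, Subsingleton.elim _ _, Unit, inferInstance, Measure.dirac (),
        inferInstance, fun _ => 0, ?_, ?_⟩
      · intro ε hε
        have he : (fun (_ : Unit) i => ε i * (0 : Fin 0 → ℝ) i) =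
            (fun _ => (0 : Fin 0 → ℝ)) := by
          funext ω; exact Subsingleton.elim _ _
        rw [he]
        exact IdentDistrib.refl measurable_const.aemeasurable
      · have hX : X = fun _ => (default : Fin 0 → ℝ) := by
          funext ω; exact Subsingleton.elim _ _
        have hY : (fun (_ : Unit) => μ + (1 : Matrix (Fin 0) (Fin 0) ℝ).mulVec 0) =
            (fun _ => (default : Fin 0 → ℝ)) := by
          funext ω; exact Subsingleton.elim _ _
        rw [hX, hY]
        refine ⟨measurable_const.aemeasurable, measurable_const.aemeasurable, ?_⟩
        simp [Measure.map_const]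
    · obtain ⟨M, hM, Ω', mΩ', P', hP', Z', hZ', hid⟩ :=
        h d hd le_rfl 1 (by simp)
      refine ⟨M, mul_eq_one_comm.mp hM, Ω', mΩ', P', hP', Z', hZ', ?_⟩
      have hmeas : Measurable fun v : Fin d → ℝ => μ + v :=
        measurable_const.add measurable_id
      have h2 := hid.comp hmeas
      convert h2 using 1
      all_goals (funext ω; simp [Matrix.one_mulVec])
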